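/- Every preferred extension of a consistent Deductive ASPIC⊖ argumentation system satisfies direct consistency: if E is a preferred extension then there are no φ, ψ ∈ E^C with φ = ¬ψ or ¬φ = ψ. -/
import Mathlib


namespace JS

inductive Lab : Type
  | IN | OUT | UNDEC
deriving DecidableEq

structure JSBAF (A : Type) where
  att : A → A → Prop
  supp : Set A → A → Prop
  pref : A → A → Prop

variable {A : Type}

/-- Strict arguments: supported by the empty set or only by strict arguments. -/
inductive Strict (J : JSBAF A) : A → Prop
  | mk (S : Set A) (a : A) (h : J.supp S a) (hS : ∀ b ∈ S, Strict J b) : Strict J a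

/-- Structural restrictions on JSBAFs. -/
structure Restr (J : JSBAF A) : Prop where
  finSupp : ∀ S b, J.supp S b → S.Finite
  uniqSupp : ∀ S S' b, J.supp S b → J.supp S' b → S = S'
  acyc : ∀ a, ¬ Relation.TransGen (fun x y => ∃ S, J.supp S y ∧ x ∈ S) a a
  strictUnatt : ∀ a b, Strict J b → ¬ J.att a b
  prefRefl : ∀ a, J.pref a a
  prefTrans : ∀ a b c, J.pref a b → J.pref b c → J.pref a c
  prefTotal : ∀ a b, J.pref a b ∨ J.pref b a
  strictEq : ∀ a b, Strict J a → Strict J b → J.pref a b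
  strictTop : ∀ a b, ¬ Strict J a → Strict J b → J.pref a b ∧ ¬ J.pref b a

def inL (L : A → Lab) : Set A := {a | L a = Lab.IN}
def outL (L : A → Lab) : Set A := {a | L a = Lab.OUT}
def undecL (L : A → Lab) : Set A := {a | L a = Lab.UNDEC}

/-- Definition 2, item 1: legally IN. -/
def legallyIn (J : JSBAF A) (L : A → Lab) (a : A) : Prop :=
  (∀ b, J.att b a → L b = Lab.OUT) ∧
  ∀ S c, J.supp S c → a ∈ S → (∀ b ∈ S, b ≠ a → J.pref a b) →
    (L c = Lab.IN ∨
     (L c = Lab.UNDEC ∧ ∃ b ∈ S, b ≠ a ∧ (L b = Lab.OUT ∨ L b = Lab.UNDEC)) ∨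
     (L c = Lab.OUT ∧
       ((∃ b ∈ S, b ≠ a ∧ L b = Lab.OUT) ∨
        (∃ b₁ ∈ S, ∃ b₂ ∈ S, b₁ ≠ a ∧ b₂ ≠ a ∧ b₁ ≠ b₂ ∧
          L b₁ = Lab.UNDEC ∧ L b₂ = Lab.UNDEC))))

/-- Definition 2, item 2: legally OUT. -/
def legallyOut (J : JSBAF A) (L : A → Lab) (a : A) : Prop :=
  (∃ b, J.att b a ∧ L b = Lab.IN) ∨
  (∃ (n : ℕ) (S : ℕ → Set A) (b : ℕ → A),
    (∀ i ≤ n, J.supp (S i) (b i)) ∧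
    (∀ i < n, b i ∈ S (i + 1)) ∧
    a ∈ S 0 ∧
    (∀ d ∈ S 0, d ≠ a → L d = Lab.IN) ∧
    (∃ c, J.att c (b n) ∧ L c = Lab.IN) ∧
    (∀ i ≤ n, L (b i) = Lab.OUT) ∧
    (∀ i, 1 ≤ i → i ≤ n → ∀ d ∈ S i, d ≠ b (i - 1) → L d = Lab.IN) ∧
    (∀ d ∈ S 0, d ≠ a → J.pref a d))

/-- Admissible labelings. -/
def Admissible (J : JSBAF A) (L : A → Lab) : Prop :=
  (∀ a, L a = Lab.IN → legallyIn J L a) ∧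
  (∀ a, L a = Lab.OUT ↔ legallyOut J L a) ∧
  (∀ a, Strict J a → L a = Lab.IN)

/-- Preferred labelings: maximal admissible w.r.t. inclusion of IN-sets. -/
def Preferred (J : JSBAF A) (L : A → Lab) : Prop :=
  Admissible J L ∧ ∀ L', Admissible J L' → ¬ (inL L ⊂ inL L')

/-- The iterated OUT-sets of the SIM labeling. -/
def simO (J : JSBAF A) : ℕ → Set A
  | 0 => {a | ∃ b, Strict J b ∧ J.att b a}
  | n + 1 => simO J n ∪
      {a | ∃ S c, J.supp S c ∧ a ∈ S ∧ c ∈ simO J n ∧ ∀ d ∈ S, d ≠ a → Strict J d}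

def simIn (J : JSBAF A) : Set A := {a | Strict J a}
def simOut (J : JSBAF A) : Set A := ⋃ n, simO J n

open Classical in
/-- The strict-including-minimal labeling. -/
noncomputable def SIM (J : JSBAF A) : A → Lab := fun a =>
  if Strict J a then Lab.IN else if a ∈ simOut J then Lab.OUT else Lab.UNDEC

/-- The order on labelings. -/
def leL (L₁ L₂ : A → Lab) : Prop := inL L₁ ⊆ inL L₂ ∧ outL L₁ ⊆ outL L₂

end JS
namespace ASPIC

/-- An underlying logical language: formulas, atoms, interpretations, a classical
negation and conjunction, and the interpolation-style assumption on syntactically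
disjoint sets of formulas. -/
structure Logic where
  F : Type
  Atom : Type
  atoms : F → Set Atom
  I : Type
  inhab : Nonempty I
  Models : I → F → Prop
  neg : F → F
  conj : F → F → F
  neg_spec : ∀ i φ, Models i (neg φ) ↔ ¬ Models i φ
  conj_spec : ∀ i φ ψ, Models i (conj φ ψ) ↔ (Models i φ ∧ Models i ψ)
  atoms_neg : ∀ φ, atoms (neg φ) = atoms φ
  atoms_conj : ∀ φ ψ, atoms (conj φ ψ) = atoms φ ∪ atoms ψ
  interp : ∀ Γ Δ : Set F, (∀ φ ∈ Γ, ∀ ψ ∈ Δ, atoms φ ∩ atoms ψ = ∅) →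
    (∃ i, ∀ φ ∈ Γ, Models i φ) → (∃ i, ∀ ψ ∈ Δ, Models i ψ) →
    (∃ i, (∀ φ ∈ Γ, Models i φ) ∧ (∀ ψ ∈ Δ, Models i ψ))

/-- The model-based consequence relation ⊨_C. -/
def Conseq (L : Logic) (Γ : Set L.F) (φ : L.F) : Prop :=
  ∀ i, (∀ ψ ∈ Γ, L.Models i ψ) → L.Models i φ

/-- φ = −ψ: one formula is the negation of the other. -/
def negOf (L : Logic) (φ ψ : L.F) : Prop := φ = L.neg ψ ∨ ψ = L.neg φ

/-- Conjunction of a nonempty list of formulas: conjL L φ [ψ₁,…] = φ ∧ ψ₁ ∧ … . -/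
def conjL (L : Logic) : L.F → List L.F → L.F
  | φ, [] => φ
  | φ, ψ :: l => L.conj φ (conjL L ψ l)

/-- A (defeasible) rule: antecedents and conclusion. -/
abbrev Rule (L : Logic) := List L.F × L.F

/-- An argumentation system of Deductive ASPIC⊖: satisfiable axioms, defeasible rules,
a (partial) naming function and a total preorder on defeasible rules.  The strict rules
are the axiomatic rules together with all consequence-based rules. -/
structure ASys (L : Logic) where
  AX : Set L.F
  AX_sat : ∃ i, ∀ φ ∈ AX, L.Models i φ
  Rd : Set (Rule L)
  name : Rule L → Option L.F
  rpref : Rule L → Rule L → Prop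
  rpref_refl : ∀ r, rpref r r
  rpref_trans : ∀ r s t, rpref r s → rpref s t → rpref r t
  rpref_total : ∀ r s, rpref r s ∨ rpref s r

/-- Top-rule kinds: axiomatic, consequence-based strict, defeasible. -/
inductive RK : Type
  | ax | cb | df
deriving DecidableEq

/-- Argument trees (with the kind of the top rule and the conclusion recorded). -/
inductive Arg (L : Logic) : Type
  | node (k : RK) (subs : List (Arg L)) (concl : L.F)

def Arg.concl {L : Logic} : Arg L → L.F
  | .node _ _ φ => φ

def Arg.subs {L : Logic} : Arg L → List (Arg L)
  | .node _ s _ => s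

def Arg.kind {L : Logic} : Arg L → RK
  | .node k _ _ => k

/-- Well-formed arguments of an argumentation system. -/
inductive Wf (L : Logic) (as : ASys L) : Arg L → Prop
  | ax (φ : L.F) (h : φ ∈ as.AX) : Wf L as (.node .ax [] φ)
  | cb (subs : List (Arg L)) (φ : L.F) (hs : ∀ a ∈ subs, Wf L as a)
      (h : Conseq L {ψ | ∃ a ∈ subs, Arg.concl a = ψ} φ) : Wf L as (.node .cb subs φ)
  | df (subs : List (Arg L)) (φ : L.F) (hs : ∀ a ∈ subs, Wf L as a)
      (h : (subs.map Arg.concl, φ) ∈ as.Rd) : Wf L as (.node .df subs φ)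

/-- Sub-argument relation: `Sub a b` means a is a sub-argument of b. -/
inductive Sub (L : Logic) : Arg L → Arg L → Prop
  | refl (a : Arg L) : Sub L a a
  | step (a b : Arg L) (k : RK) (subs : List (Arg L)) (φ : L.F)
      (hb : b ∈ subs) (h : Sub L a b) : Sub L a (.node k subs φ)

/-- Conclusions of the sub-arguments of a. -/
def SubC (L : Logic) (a : Arg L) : Set L.F := {φ | ∃ b, Sub L b a ∧ Arg.concl b = φ}

/-- Axiomatic and defeasible sub-arguments. -/
def ADSub (L : Logic) (a : Arg L) : Set (Arg L) := {b | Sub L b a ∧ Arg.kind b ≠ RK.cb}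

/-- Conclusions of the axiomatic and defeasible sub-arguments. -/
def ADSubC (L : Logic) (a : Arg L) : Set L.F :=
  {φ | ∃ b, Sub L b a ∧ Arg.kind b ≠ RK.cb ∧ Arg.concl b = φ}

/-- Defeasible rules used in an argument. -/
def DR (L : Logic) (a : Arg L) : Set (Rule L) :=
  {r | ∃ subs, Sub L (Arg.node RK.df subs r.2) a ∧ r.1 = subs.map Arg.concl}

/-- Strict arguments: no defeasible rules used. -/
def IsStrictArg (L : Logic) (a : Arg L) : Prop := DR L a = ∅

/-- Elitist weakest-link lifting of the rule preorder to arguments (a ⪯_ewl b). -/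
def ewl (L : Logic) (as : ASys L) (a b : Arg L) : Prop :=
  (DR L a = ∅ ∧ DR L b = ∅) ∨ ∃ ra ∈ DR L a, ∀ rb ∈ DR L b, as.rpref ra rb

/-- a undercuts b: the conclusion of a is the negation of the name of a defeasible rule
used in b. -/
def Undercuts (L : Logic) (as : ASys L) (a b : Arg L) : Prop :=
  ∃ subs φ, Sub L (Arg.node RK.df subs φ) b ∧
    ∃ nm, as.name (subs.map Arg.concl, φ) = some nm ∧ negOf L (Arg.concl a) nm

/-- a gen-rebuts b: b is defeasible and the conclusion of a is the negation of a conjunction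
of conclusions of sub-arguments of b. -/
def GenRebuts (L : Logic) (a b : Arg L) : Prop :=
  DR L b ≠ ∅ ∧ ∃ (φ : L.F) (l : List L.F),
    (∀ χ ∈ φ :: l, χ ∈ SubC L b) ∧ Arg.concl a = L.neg (conjL L φ l)

/-- a defeats b: a undercuts b, or a gen-rebuts b and a is not strictly weaker than b. -/
def Defeats (L : Logic) (as : ASys L) (a b : Arg L) : Prop :=
  Undercuts L as a b ∨
    (GenRebuts L a b ∧ ¬ (ewl L as a b ∧ ¬ ewl L as b a))

/-- The strict rules of an argumentation system: axiomatic or consequence-based. -/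
def StrictRule (L : Logic) (as : ASys L) (r : Rule L) : Prop :=
  (r.1 = [] ∧ r.2 ∈ as.AX) ∨ Conseq L {φ | φ ∈ r.1} r.2

end ASPIC

namespace ASPIC

/-- The well-formed arguments of an argumentation system. -/
def WfArg (L : Logic) (as : ASys L) : Type := {a : Arg L // Wf L as a}

/-- The JSBAF corresponding to an argumentation system: attacks are defeats, supports are
applications of strict rules, preferences are the elitist weakest-link lifting. -/
def toJ (L : Logic) (as : ASys L) : JS.JSBAF (WfArg L as) where
  att a b := Defeats L as a.1 b.1
  supp S b := (Arg.kind b.1 = RK.ax ∨ Arg.kind b.1 = RK.cb) ∧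
    S = {a : WfArg L as | a.1 ∈ Arg.subs b.1}
  pref a b := ewl L as a.1 b.1

/-- The conclusions of the IN-arguments of a labeling. -/
def concls (L : Logic) (as : ASys L) (Lb : WfArg L as → JS.Lab) : Set L.F :=
  {φ | ∃ a : WfArg L as, Lb a = JS.Lab.IN ∧ Arg.concl a.1 = φ}

/-- The AS is consistent: no two strict arguments have contradictory conclusions. -/
def ASConsistent (L : Logic) (as : ASys L) : Prop :=
  ¬ ∃ a b : Arg L, Wf L as a ∧ Wf L as b ∧ DR L a = ∅ ∧ DR L b = ∅ ∧
      negOf L (Arg.concl a) (Arg.concl b)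

end ASPIC


namespace ASPIC

variable {L : Logic}

lemma sub_cb_single {y x : Arg L} {φ : L.F}
    (h : Sub L y (Arg.node RK.cb [x] φ)) :
    y = Arg.node RK.cb [x] φ ∨ Sub L y x := by
  cases h with
  | refl => exact Or.inl rfl
  | step a c k w hb hs =>
    simp only [List.mem_singleton] at hb
    subst hb
    exact Or.inr hs

lemma DR_cb_single (x : Arg L) (φ : L.F) :
    DR L (Arg.node RK.cb [x] φ) = DR L x := by
  ext r
  simp only [DR, Set.mem_setOf_eq]
  constructor
  · rintro ⟨subs, hs, hm⟩
    rcases sub_cb_single hs with h | h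
    · exact absurd (congrArg Arg.kind h) (by simp [Arg.kind])
    · exact ⟨subs, h, hm⟩
  · rintro ⟨subs, hs, hm⟩
    exact ⟨subs, Sub.step _ x RK.cb [x] φ (by simp) hs, hm⟩

lemma genRebuts_of_negConcl {a b : Arg L} (hdb : DR L b ≠ ∅)
    (h : Arg.concl a = L.neg (Arg.concl b)) : GenRebuts L a b := by
  refine ⟨hdb, Arg.concl b, [], ?_, ?_⟩
  · rintro χ hχ
    simp only [List.mem_singleton] at hχ
    subst hχ
    exact ⟨b, Sub.refl b, rfl⟩
  · simpa [conjL] using h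

lemma ewl_congr_left {as : ASys L} {a a' b : Arg L} (h : DR L a = DR L a') :
    ewl L as a b ↔ ewl L as a' b := by
  simp [ewl, h]

/-- The key lemma: two IN arguments with `concl a = neg (concl b)` yield False. -/
lemma key_contra (as : ASys L) (hcons : ASConsistent L as)
    (Lb : WfArg L as → JS.Lab) (hadm : JS.Admissible (toJ L as) Lb)
    (a b : WfArg L as) (haIN : Lb a = JS.Lab.IN) (hbIN : Lb b = JS.Lab.IN)
    (hneg : Arg.concl a.1 = L.neg (Arg.concl b.1)) : False := by
  by_cases h0 : DR L a.1 = ∅ ∧ DR L b.1 = ∅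
  · exact hcons ⟨a.1, b.1, a.2, b.2, h0.1, h0.2, Or.inl hneg⟩
  -- the cb-argument b' concluding ¬ concl a
  set b' : Arg L := Arg.node RK.cb [b.1] (L.neg (Arg.concl a.1)) with hb'def
  have hwfb' : Wf L as b' := by
    refine Wf.cb [b.1] _ ?_ ?_
    · rintro x hx
      simp only [List.mem_singleton] at hx
      subst hx
      exact b.2
    intro i hi
    have hm : L.Models i (Arg.concl b.1) := hi _ ⟨b.1, by simp, rfl⟩
    rw [hneg, L.neg_spec, L.neg_spec]
    exact fun hn => hn hm
  set B' : WfArg L as := ⟨b', hwfb'⟩ with hB'def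
  have hDRb' : DR L b' = DR L b.1 := DR_cb_single b.1 _
  have hconclb' : Arg.concl b' = L.neg (Arg.concl a.1) := rfl
  -- B' is IN, by the support clause of legallyIn b
  have hB'IN : Lb B' = JS.Lab.IN := by
    have hli := (hadm.1 b hbIN).2
    have hsingle : ∀ z : WfArg L as,
        z ∈ {x : WfArg L as | x.1 ∈ Arg.subs B'.1} → z = b := by
      intro z hz
      simp only [Set.mem_setOf_eq, hB'def, hb'def, Arg.subs,
        List.mem_singleton] at hz
      exact Subtype.ext hz
    have hres := hli {x : WfArg L as | x.1 ∈ Arg.subs B'.1} B'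
      ⟨Or.inr rfl, rfl⟩
      (by simp [hB'def, hb'def, Arg.subs])
      (by intro z hz hne; exact absurd (hsingle z hz) hne)
    rcases hres with h | ⟨_, z, hz, hne, _⟩ | ⟨_, h | h⟩
    · exact h
    · exact absurd (hsingle z hz) hne
    · obtain ⟨z, hz, hne, _⟩ := h
      exact absurd (hsingle z hz) hne
    · obtain ⟨z, hz, _, _, hne, _⟩ := h
      exact absurd (hsingle z hz) hne
  -- an IN argument cannot attack an IN argument
  have hNoAtt : ∀ x y : WfArg L as, Lb x = JS.Lab.IN → Lb y = JS.Lab.IN →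
      ¬ Defeats L as x.1 y.1 := by
    intro x y hx hy hatt
    have := (hadm.1 y hy).1 x hatt
    rw [hx] at this
    exact JS.Lab.noConfusion this
  by_cases hdb : DR L b.1 = ∅
  · -- b strict, so a is defeasible; B' defeats a
    have hda : DR L a.1 ≠ ∅ := fun h => h0 ⟨h, hdb⟩
    have hgr : GenRebuts L b' a.1 := genRebuts_of_negConcl hda hconclb'
    have hnewl : ¬ ewl L as b' a.1 := by
      rintro (⟨_, h1⟩ | ⟨ra, hra, _⟩)
      · exact hda h1
      · rw [hDRb', hdb] at hra; exact hra
    exact hNoAtt B' a hB'IN haIN (Or.inr ⟨hgr, fun h => hnewl h.1⟩)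
  · -- b defeasible: a gen-rebuts b
    have hgr : GenRebuts L a.1 b.1 := genRebuts_of_negConcl hdb hneg
    by_cases hd : ewl L as a.1 b.1 ∧ ¬ ewl L as b.1 a.1
    · -- a strictly weaker; then a is defeasible and B' defeats a
      have hda : DR L a.1 ≠ ∅ := by
        rcases hd.1 with ⟨_, h⟩ | ⟨ra, hra, _⟩
        · exact absurd h hdb
        · intro h; rw [h] at hra; exact hra
      have hgr' : GenRebuts L b' a.1 := genRebuts_of_negConcl hda hconclb'
      have hdef : Defeats L as b' a.1 := by
        refine Or.inr ⟨hgr', fun h => ?_⟩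
        exact hd.2 ((ewl_congr_left hDRb').mp h.1)
      exact hNoAtt B' a hB'IN haIN hdef
    · -- a defeats b
      exact hNoAtt a b haIN hbIN (Or.inr ⟨hgr, hd⟩)

end ASPIC

open ASPIC in
/-- Every preferred extension of a consistent Deductive ASPIC⊖ argumentation system
satisfies direct consistency: no two conclusions of accepted arguments contradict each other. -/
theorem preferred_direct_consistency (L : Logic) (as : ASys L)
    (hcons : ASConsistent L as)
    (Lb : WfArg L as → JS.Lab) (hpr : JS.Preferred (toJ L as) Lb) :
    ∀ φ ∈ concls L as Lb, ∀ ψ ∈ concls L as Lb, ¬ negOf L φ ψ := by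
  intro φ hφ ψ hψ hneg
  obtain ⟨a, haIN, haC⟩ := hφ
  obtain ⟨b, hbIN, hbC⟩ := hψ
  rcases hneg with h | h
  · exact key_contra as hcons Lb hpr.1 a b haIN hbIN (by rw [haC, hbC]; exact h)
  · exact key_contra as hcons Lb hpr.1 b a hbIN haIN (by rw [haC, hbC]; exact h)
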